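/- Fix real numbers r > 0 and F > 0, and set t_c = (2/3)√(r³/F). Define R : [0, t_c) → ℝ by R(t) = r·(1 − t/t_c)^{2/3}. Then R(0) = r, R(t) > 0 on [0, t_c), R is differentiable on [0, t_c) with dR/dt = −√(F/R(t)) there, R(t)³ = (9/4)·F·(t_c − t)² for all t ∈ [0, t_c), and R(t) → 0 as t → t_c⁻. -/

import Mathlib

/-- The marginally bound collapsing solution: with `t_c = (2/3)√(r³/F)` and
`R(t) = r(1 - t/t_c)^{2/3}`, one has `R(0) = r`, `R > 0` on `[0, t_c)`,
`dR/dt = -√(F/R)` there, `R³ = (9/4)F(t_c - t)²`, and `R → 0` as `t → t_c⁻`. -/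
theorem marginally_bound_solution (r F : ℝ) (hr : 0 < r) (hF : 0 < F)
    (t_c : ℝ) (ht_c : t_c = 2 / 3 * Real.sqrt (r ^ 3 / F))
    (R : ℝ → ℝ) (hR : ∀ t, R t = r * (1 - t / t_c) ^ ((2 : ℝ) / 3)) :
    R 0 = r ∧
    (∀ t ∈ Set.Ico 0 t_c, 0 < R t) ∧
    (∀ t ∈ Set.Ico 0 t_c, HasDerivAt R (-Real.sqrt (F / R t)) t) ∧
    (∀ t ∈ Set.Ico 0 t_c, R t ^ 3 = 9 / 4 * F * (t_c - t) ^ 2) ∧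
    Filter.Tendsto R (nhdsWithin t_c (Set.Iio t_c)) (nhds 0) := by
  have hrF : 0 < r ^ 3 / F := by positivity
  have hsq : 0 < Real.sqrt (r ^ 3 / F) := Real.sqrt_pos.mpr hrF
  have htc : 0 < t_c := by rw [ht_c]; positivity
  have htc2 : t_c ^ 2 = 4 / 9 * (r ^ 3 / F) := by
    rw [ht_c, mul_pow, Real.sq_sqrt hrF.le]; ring
  have hu : ∀ t ∈ Set.Ico 0 t_c, 0 < 1 - t / t_c := by
    intro t ht
    have : t / t_c < 1 := (div_lt_one htc).mpr ht.2
    linarith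
  have hpos : ∀ t ∈ Set.Ico 0 t_c, 0 < R t := by
    intro t ht
    rw [hR t]
    exact mul_pos hr (Real.rpow_pos_of_pos (hu t ht) _)
  refine ⟨?_, hpos, ?_, ?_, ?_⟩
  · rw [hR 0]; simp
  · intro t ht
    set u := 1 - t / t_c with hu_def
    have hu0 : 0 < u := hu t ht
    have hinner : HasDerivAt (fun s : ℝ => 1 - s / t_c) (-(1 / t_c)) t := by
      simpa using ((hasDerivAt_id t).div_const t_c).const_sub 1
    have hd : HasDerivAt (fun s : ℝ => r * (1 - s / t_c) ^ ((2 : ℝ) / 3))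
        (r * (-(1 / t_c) * ((2 : ℝ) / 3) * u ^ ((2 : ℝ) / 3 - 1))) t := by
      exact ((hinner.rpow_const (Or.inl hu0.ne')).const_mul r)
    have hRfun : R = fun s => r * (1 - s / t_c) ^ ((2 : ℝ) / 3) := funext hR
    have hd' : HasDerivAt R (r * (-(1 / t_c) * ((2 : ℝ) / 3) * u ^ ((2 : ℝ) / 3 - 1))) t := by
      rw [hRfun]; exact hd
    convert hd' using 1
    -- show -√(F / R t) equals that derivative value
    have hRt : R t = r * u ^ ((2 : ℝ) / 3) := hR t
    have hval : F / R t = (2 * r / (3 * t_c) * u ^ (-(1 : ℝ) / 3)) ^ 2 := by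
      rw [hRt]
      have h1 : (u ^ (-(1 : ℝ) / 3)) ^ 2 = u ^ (-(2 : ℝ) / 3) := by
        rw [← Real.rpow_natCast (u ^ (-(1:ℝ)/3)) 2, ← Real.rpow_mul hu0.le]
        norm_num
      have h2 : u ^ (-(2 : ℝ) / 3) = (u ^ ((2 : ℝ) / 3))⁻¹ := by
        rw [← Real.rpow_neg hu0.le]; norm_num
      rw [mul_pow, h1, h2]
      have hupow : 0 < u ^ ((2 : ℝ) / 3) := Real.rpow_pos_of_pos hu0 _
      have htc2' : 3 * F * t_c ^ 2 = 4 / 3 * r ^ 3 := by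
        rw [htc2]; field_simp; ring
      field_simp
      nlinarith [hupow, htc, hr, hF]
    have hnn : 0 ≤ 2 * r / (3 * t_c) * u ^ (-(1 : ℝ) / 3) := by positivity
    rw [hval, Real.sqrt_sq hnn]
    have h3 : u ^ ((2 : ℝ) / 3 - 1) = u ^ (-(1 : ℝ) / 3) := by norm_num
    rw [h3]
    field_simp
  · intro t ht
    have hu0 : 0 < 1 - t / t_c := hu t ht
    rw [hR t, mul_pow, ← Real.rpow_natCast ((1 - t / t_c) ^ ((2:ℝ)/3)) 3,
      ← Real.rpow_mul hu0.le]
    norm_num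
    rw [show (1 - t / t_c) = (t_c - t) / t_c by field_simp, div_pow, htc2]
    field_simp
  · have hRfun : R = fun s => r * (1 - s / t_c) ^ ((2 : ℝ) / 3) := funext hR
    rw [hRfun]
    have h1 : Filter.Tendsto (fun s : ℝ => 1 - s / t_c) (nhdsWithin t_c (Set.Iio t_c))
        (nhds 0) := by
      have : Filter.Tendsto (fun s : ℝ => 1 - s / t_c) (nhds t_c) (nhds (1 - t_c / t_c)) :=
        (continuous_const.sub (continuous_id.div_const t_c)).tendsto t_c
      rw [div_self htc.ne'] at this
      simpa using this.mono_left nhdsWithin_le_nhds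
    have h2 : ContinuousAt (fun x : ℝ => x ^ ((2 : ℝ) / 3)) 0 := by
      apply Real.continuousAt_rpow_const
      right; norm_num
    have h3 := (h2.tendsto.comp h1).const_mul r
    simpa [Real.zero_rpow (by norm_num : ((2:ℝ)/3) ≠ 0)] using h3
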